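/- arXiv:2104.09077 — 2 statements merged into one kernel-verified Lean document; each statement's English description precedes it below -/
import Mathlib

section
/- There is an absolute constant C > 0 such that for every smooth Y : ℝ × ℝ³ → ℝ³, every t ≥ 0 and every y ∈ ℝ³ with r = |y| > 0: |(t − r) ΔY| ≤ C ( Σ_Z |∂ Z Y| + |∂Y| + t |(∂_t² − Δ)Y| ) at the point (t,y), where the sum runs over Z ∈ {∂_t, ∂₁, ∂₂, Ω̃₁, Ω̃₂, Ω̃₃, S̃}. -/
/-!
STATEMENT 14: Pointwise estimate (C-6):
|(t − r)ΔY| ≤ C ( Σ_Z |∂ Z Y| + |∂Y| + t |(∂_t² − Δ)Y| ),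
where Z ranges over {∂_t, ∂₁, ∂₂, Ω̃₁, Ω̃₂, Ω̃₃, S̃}.
-/

noncomputable section

namespace Stmt14

abbrev Pt : Type := EuclideanSpace ℝ (Fin 3)

/-- Scalar space-time functions. -/
abbrev STF : Type := ℝ → Pt → ℝ

/-- ℝ³-valued space-time functions. -/
abbrev STV : Type := ℝ → Pt → Fin 3 → ℝ

def pd (j : Fin 3) (f : Pt → ℝ) : Pt → ℝ :=
  fun x => fderiv ℝ f x (EuclideanSpace.single j 1)

/-- Time derivative ∂_t. -/
def Dt (f : STF) : STF := fun t x => deriv (fun s => f s x) t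

/-- Spatial derivative ∂_j. -/
def Dsp (j : Fin 3) (f : STF) : STF := fun t x => pd j (f t) x

/-- All space-time first derivatives ∂ = (∂_t, ∂₁, ∂₂, ∂₃). -/
def Dst : Fin 4 → STF → STF := ![Dt, Dsp 0, Dsp 1, Dsp 2]

/-- The wave operator ∂_t² − Δ. -/
def Box (f : STF) : STF := fun t x => Dt (Dt f) t x - ∑ j, Dsp j (Dsp j f) t x

/-- The rotation operators Ω = y ∧ ∇ : Ωᵢ = y_{i+1}∂_{i+2} − y_{i+2}∂_{i+1} (cyclic). -/
def Om (i : Fin 3) (f : STF) : STF :=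
  fun t x => x (i+1) * Dsp (i+2) f t x - x (i+2) * Dsp (i+1) f t x

/-- The scaling operator S = t∂_t + r∂_r = t∂_t + Σ_j y_j ∂_j. -/
def Sc (f : STF) : STF := fun t x => t * Dt f t x + ∑ j, x j * Dsp j f t x

/-- The matrices U₁, U₂, U₃. -/
def Umat : Fin 3 → Matrix (Fin 3) (Fin 3) ℝ :=
  ![!![0,0,0; 0,0,1; 0,-1,0], !![0,0,-1; 0,0,0; 1,0,0], !![0,1,0; -1,0,0; 0,0,0]]

/-- Componentwise application of a scalar operator to a vector field. -/
def mapc (T : STF → STF) (Y : STV) : STV := fun t x i => T (fun s y => Y s y i) t x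

/-- The modified rotations Ω̃ᵢY = ΩᵢY + UᵢY. -/
def OmT (i : Fin 3) (Y : STV) : STV :=
  fun t x j => Om i (fun s y => Y s y j) t x + ∑ k, Umat i j k * Y t x k

/-- The modified scaling S̃Y = (S − 1)Y. -/
def ScT (Y : STV) : STV := fun t x j => Sc (fun s y => Y s y j) t x - Y t x j

/-- The seven generators {∂_t, ∂₁, ∂₂, Ω̃₁, Ω̃₂, Ω̃₃, S̃} acting on vector fields. -/
def Gen : Fin 7 → STV → STV :=
  ![mapc Dt, mapc (Dsp 0), mapc (Dsp 1), OmT 0, OmT 1, OmT 2, ScT]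

/-- |∂W| : norm of the array of all first-order space-time derivatives of W. -/
def d1Norm (W : STV) (t : ℝ) (x : Pt) : ℝ :=
  Real.sqrt (∑ b : Fin 4, ∑ i, (Dst b (fun s y => W s y i) t x)^2)

/-! ### Auxiliary toolkit -/

abbrev SP : Type := ℝ × Pt

def sg (j : Fin 3) : Pt := EuclideanSpace.single j 1

def pdv (v : SP) (G : SP → ℝ) : SP → ℝ := fun p => fderiv ℝ G p v

def wv (j : Fin 3) : SP := ((0:ℝ), sg j)

def v0 : SP := ((1:ℝ), (0:Pt))

def Fc (Y : STV) (c : Fin 3) : SP → ℝ := fun q => Y q.1 q.2 c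

lemma two_le_inf : (2 : WithTop ℕ∞) ≤ ((⊤:ℕ∞) : WithTop ℕ∞) := by
  rw [show (2 : WithTop ℕ∞) = ((2:ℕ∞) : WithTop ℕ∞) from rfl, WithTop.coe_le_coe]; exact le_top

lemma one_le_inf : (1 : WithTop ℕ∞) ≤ ((⊤:ℕ∞) : WithTop ℕ∞) := le_trans (by norm_num) two_le_inf

lemma pdv_contDiff {G : SP → ℝ} (hG : ContDiff ℝ (⊤:ℕ∞) G) (v : SP) : ContDiff ℝ (⊤:ℕ∞) (pdv v G) :=
  (hG.fderiv_right (le_refl _)).clm_apply contDiff_const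

lemma pdv_diffAt {G : SP → ℝ} (hG : ContDiff ℝ (⊤:ℕ∞) G) (v : SP) (p : SP) :
    DifferentiableAt ℝ (pdv v G) p :=
  ((pdv_contDiff hG v).differentiable (by simp)).differentiableAt

lemma diffAt {G : SP → ℝ} (hG : ContDiff ℝ (⊤:ℕ∞) G) (p : SP) : DifferentiableAt ℝ G p :=
  (hG.differentiable (by simp)).differentiableAt

lemma pdv_comm {G : SP → ℝ} (hG : ContDiff ℝ (⊤:ℕ∞) G) (p v w : SP) :
    pdv v (pdv w G) p = pdv w (pdv v G) p := by
  have hsymm : IsSymmSndFDerivAt ℝ G p := hG.contDiffAt.isSymmSndFDerivAt (by rw [minSmoothness_of_isRCLikeNormedField]; exact two_le_inf)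
  have hd : DifferentiableAt ℝ (fderiv ℝ G) p :=
    ((hG.fderiv_right (m := ((⊤:ℕ∞) : WithTop ℕ∞)) (le_refl _)).differentiable (by simp)).differentiableAt
  have e : ∀ u u' : SP, pdv u (pdv u' G) p = fderiv ℝ (fderiv ℝ G) p u u' := by
    intro u u'
    show fderiv ℝ (fun q => (fderiv ℝ G q) u') p u = _
    rw [fderiv_clm_apply hd (differentiableAt_const u')]
    simp
  rw [e, e, hsymm.eq]

lemma Dt_eq {G : SP → ℝ} (hG : ContDiff ℝ (⊤:ℕ∞) G) (t : ℝ) (x : Pt) :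
    Dt (fun s z => G (s, z)) t x = pdv v0 G (t, x) := by
  show deriv (fun s => G (s, x)) t = _
  have h1 : HasDerivAt (fun s : ℝ => ((s, x) : SP)) ((1:ℝ), (0:Pt)) t := by
    simpa using (hasDerivAt_id t).prodMk (hasDerivAt_const t x)
  have h2 : HasFDerivAt G (fderiv ℝ G (t, x)) (t, x) := (diffAt hG (t,x)).hasFDerivAt
  exact (h2.comp_hasDerivAt t h1).deriv

lemma Dsp_eq {G : SP → ℝ} (hG : ContDiff ℝ (⊤:ℕ∞) G) (j : Fin 3) (t : ℝ) (x : Pt) :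
    Dsp j (fun s z => G (s, z)) t x = pdv (wv j) G (t, x) := by
  show fderiv ℝ (fun z => G (t, z)) x (sg j) = _
  have h1 : HasFDerivAt (fun z : Pt => ((t, z) : SP))
      (((0 : Pt →L[ℝ] ℝ)).prod (ContinuousLinearMap.id ℝ Pt)) x :=
    (hasFDerivAt_const t x).prodMk (hasFDerivAt_id x)
  have h2 : HasFDerivAt G (fderiv ℝ G (t, x)) (t, x) := (diffAt hG (t,x)).hasFDerivAt
  have h3 := (h2.comp x h1).fderiv
  show fderiv ℝ (G ∘ Prod.mk t) x (sg j) = _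
  rw [h3]
  rfl

lemma Dsp_Dsp {G : SP → ℝ} (hG : ContDiff ℝ (⊤:ℕ∞) G) (j k : Fin 3) (t : ℝ) (x : Pt) :
    Dsp j (Dsp k (fun s z => G (s, z))) t x = pdv (wv j) (pdv (wv k) G) (t, x) := by
  have h1 : Dsp k (fun s z => G (s, z)) = fun s z => pdv (wv k) G (s, z) :=
    funext fun s => funext fun z => Dsp_eq hG k s z
  rw [h1]; exact Dsp_eq (pdv_contDiff hG _) j t x

lemma Dt_Dt {G : SP → ℝ} (hG : ContDiff ℝ (⊤:ℕ∞) G) (t : ℝ) (x : Pt) :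
    Dt (Dt (fun s z => G (s, z))) t x = pdv v0 (pdv v0 G) (t, x) := by
  have h1 : Dt (fun s z => G (s, z)) = fun s z => pdv v0 G (s, z) :=
    funext fun s => funext fun z => Dt_eq hG s z
  rw [h1]; exact Dt_eq (pdv_contDiff hG _) t x

def cjL (j : Fin 3) : SP →L[ℝ] ℝ := (EuclideanSpace.proj j).comp (ContinuousLinearMap.snd ℝ ℝ Pt)

lemma cj_contDiff (j : Fin 3) : ContDiff ℝ (⊤:ℕ∞) (fun p : SP => p.2 j) := (cjL j).contDiff

lemma pdv_add {G H : SP → ℝ} {p : SP} (hG : DifferentiableAt ℝ G p) (hH : DifferentiableAt ℝ H p) (v : SP) :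
    pdv v (fun q => G q + H q) p = pdv v G p + pdv v H p := by
  show (fderiv ℝ (fun q => G q + H q) p) v = _
  rw [fderiv_fun_add hG hH]; rfl

lemma pdv_sub {G H : SP → ℝ} {p : SP} (hG : DifferentiableAt ℝ G p) (hH : DifferentiableAt ℝ H p) (v : SP) :
    pdv v (fun q => G q - H q) p = pdv v G p - pdv v H p := by
  show (fderiv ℝ (fun q => G q - H q) p) v = _
  rw [fderiv_fun_sub hG hH]; rfl

lemma pdv_const_mul {G : SP → ℝ} {p : SP} (hG : DifferentiableAt ℝ G p) (c : ℝ) (v : SP) :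
    pdv v (fun q => c * G q) p = c * pdv v G p := by
  show (fderiv ℝ (fun q => c * G q) p) v = _
  rw [fderiv_const_mul hG]; rfl

lemma pdv_fst_mul {G : SP → ℝ} {p : SP} (hG : DifferentiableAt ℝ G p) (v : SP) :
    pdv v (fun q => q.1 * G q) p = v.1 * G p + p.1 * pdv v G p := by
  show (fderiv ℝ (fun q => q.1 * G q) p) v = _
  rw [fderiv_fun_mul (differentiable_fst.differentiableAt) hG]
  simp [pdv, fderiv_fst]
  ring

lemma pdv_cj_mul {G : SP → ℝ} {p : SP} (hG : DifferentiableAt ℝ G p) (j : Fin 3) (v : SP) :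
    pdv v (fun q => q.2 j * G q) p = v.2 j * G p + p.2 j * pdv v G p := by
  show (fderiv ℝ (fun q => q.2 j * G q) p) v = _
  have hdj : DifferentiableAt ℝ (fun q : SP => q.2 j) p := (cjL j).differentiableAt
  rw [fderiv_fun_mul hdj hG]
  have : fderiv ℝ (fun q : SP => q.2 j) p = cjL j := (cjL j).fderiv
  simp [pdv, this]
  have : (cjL j) v = v.2 j := rfl
  rw [this]; ring

lemma pdv_sum {G : Fin 3 → SP → ℝ} {p : SP} (hG : ∀ j, DifferentiableAt ℝ (G j) p) (v : SP) :
    pdv v (fun q => ∑ j, G j q) p = ∑ j, pdv v (G j) p := by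
  show (fderiv ℝ (fun q => ∑ j, G j q) p) v = _
  rw [fderiv_fun_sum (fun j _ => hG j)]; rfl


section YSec
variable {Y : STV}

/-- Uncurried form of the scaling generator component. -/
def GS (Y : STV) (c : Fin 3) : SP → ℝ :=
  fun q => q.1 * pdv v0 (Fc Y c) q + ∑ j, q.2 j * pdv (wv j) (Fc Y c) q - Fc Y c q

/-- Uncurried form of the rotation generator component. -/
def GO (Y : STV) (i c : Fin 3) : SP → ℝ :=
  fun q => q.2 (i+1) * pdv (wv (i+2)) (Fc Y c) q - q.2 (i+2) * pdv (wv (i+1)) (Fc Y c) q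
    + ∑ k, Umat i c k * Fc Y k q

variable (hY : ∀ i, ContDiff ℝ (⊤:ℕ∞) fun q : ℝ × Pt => Y q.1 q.2 i)
include hY

lemma hFc (c : Fin 3) : ContDiff ℝ (⊤:ℕ∞) (Fc Y c) := hY c

lemma GS_contDiff (c : Fin 3) : ContDiff ℝ (⊤:ℕ∞) (GS Y c) := by
  apply ContDiff.sub
  · apply ContDiff.add
    · exact contDiff_fst.mul (pdv_contDiff (hFc hY c) v0)
    · exact ContDiff.sum fun j _ => (cj_contDiff j).mul (pdv_contDiff (hFc hY c) (wv j))
  · exact hFc hY c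

lemma GO_contDiff (i c : Fin 3) : ContDiff ℝ (⊤:ℕ∞) (GO Y i c) := by
  apply ContDiff.add
  · exact ((cj_contDiff (i+1)).mul (pdv_contDiff (hFc hY c) (wv (i+2)))).sub
      ((cj_contDiff (i+2)).mul (pdv_contDiff (hFc hY c) (wv (i+1))))
  · exact ContDiff.sum fun k _ => contDiff_const.mul (hFc hY k)

lemma ScT_curried (c : Fin 3) :
    (fun s z => ScT Y s z c) = fun s z => GS Y c (s, z) := by
  funext s z
  have h1 : Dt (fun a b => Y a b c) s z = pdv v0 (Fc Y c) (s, z) := Dt_eq (hFc hY c) s z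
  have h2 : ∀ j, Dsp j (fun a b => Y a b c) s z = pdv (wv j) (Fc Y c) (s, z) :=
    fun j => Dsp_eq (hFc hY c) j s z
  simp only [ScT, Sc]
  rw [h1]
  simp only [h2]
  rfl

lemma OmT_curried (i c : Fin 3) :
    (fun s z => OmT i Y s z c) = fun s z => GO Y i c (s, z) := by
  funext s z
  have h2 : ∀ j, Dsp j (fun a b => Y a b c) s z = pdv (wv j) (Fc Y c) (s, z) :=
    fun j => Dsp_eq (hFc hY c) j s z
  simp only [OmT, Om]
  rw [h2, h2]
  rfl

lemma GS_expand (c : Fin 3) (t : ℝ) (y : Pt) (v : SP) :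
    pdv v (GS Y c) (t, y) =
      (v.1 * pdv v0 (Fc Y c) (t,y) + t * pdv v (pdv v0 (Fc Y c)) (t,y))
      + ((v.2 0 * pdv (wv 0) (Fc Y c) (t,y) + y 0 * pdv v (pdv (wv 0) (Fc Y c)) (t,y))
        + (v.2 1 * pdv (wv 1) (Fc Y c) (t,y) + y 1 * pdv v (pdv (wv 1) (Fc Y c)) (t,y))
        + (v.2 2 * pdv (wv 2) (Fc Y c) (t,y) + y 2 * pdv v (pdv (wv 2) (Fc Y c)) (t,y)))
      - pdv v (Fc Y c) (t,y) := by
  have hF := hFc hY c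
  have d0 : DifferentiableAt ℝ (fun q : SP => q.1 * pdv v0 (Fc Y c) q) (t,y) :=
    differentiable_fst.differentiableAt.mul (pdv_diffAt hF v0 (t,y))
  have dj : ∀ j : Fin 3, DifferentiableAt ℝ (fun q : SP => q.2 j * pdv (wv j) (Fc Y c) q) (t,y) :=
    fun j => ((cjL j).differentiableAt).mul (pdv_diffAt hF (wv j) (t,y))
  have dsum : DifferentiableAt ℝ (fun q : SP => ∑ j, q.2 j * pdv (wv j) (Fc Y c) q) (t,y) :=
    DifferentiableAt.fun_sum fun j _ => dj j
  have hsum : pdv v (fun q : SP => ∑ j, q.2 j * pdv (wv j) (Fc Y c) q) (t,y)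
      = ∑ j, pdv v (fun q : SP => q.2 j * pdv (wv j) (Fc Y c) q) (t,y) :=
    pdv_sum (G := fun j q => q.2 j * pdv (wv j) (Fc Y c) q) (fun j => dj j) v
  show pdv v (fun q : SP => (q.1 * pdv v0 (Fc Y c) q + ∑ j, q.2 j * pdv (wv j) (Fc Y c) q)
      - Fc Y c q) (t,y) = _
  rw [pdv_sub (d0.fun_add dsum) (diffAt hF (t,y)), pdv_add d0 dsum,
    pdv_fst_mul (pdv_diffAt hF v0 (t,y)), hsum, Fin.sum_univ_three,
    pdv_cj_mul (pdv_diffAt hF (wv 0) (t,y)) 0, pdv_cj_mul (pdv_diffAt hF (wv 1) (t,y)) 1,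
    pdv_cj_mul (pdv_diffAt hF (wv 2) (t,y)) 2]

lemma GO_expand (i c : Fin 3) (t : ℝ) (y : Pt) (v : SP) :
    pdv v (GO Y i c) (t, y) =
      (v.2 (i+1) * pdv (wv (i+2)) (Fc Y c) (t,y) + y (i+1) * pdv v (pdv (wv (i+2)) (Fc Y c)) (t,y))
      - (v.2 (i+2) * pdv (wv (i+1)) (Fc Y c) (t,y) + y (i+2) * pdv v (pdv (wv (i+1)) (Fc Y c)) (t,y))
      + (Umat i c 0 * pdv v (Fc Y 0) (t,y) + Umat i c 1 * pdv v (Fc Y 1) (t,y)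
         + Umat i c 2 * pdv v (Fc Y 2) (t,y)) := by
  have hF := hFc hY c
  have d1 : DifferentiableAt ℝ (fun q : SP => q.2 (i+1) * pdv (wv (i+2)) (Fc Y c) q) (t,y) :=
    ((cjL (i+1)).differentiableAt).mul (pdv_diffAt hF (wv (i+2)) (t,y))
  have d2 : DifferentiableAt ℝ (fun q : SP => q.2 (i+2) * pdv (wv (i+1)) (Fc Y c) q) (t,y) :=
    ((cjL (i+2)).differentiableAt).mul (pdv_diffAt hF (wv (i+1)) (t,y))
  have dk : ∀ k : Fin 3, DifferentiableAt ℝ (fun q : SP => Umat i c k * Fc Y k q) (t,y) :=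
    fun k => (diffAt (hFc hY k) (t,y)).const_mul _
  have dsum : DifferentiableAt ℝ (fun q : SP => ∑ k, Umat i c k * Fc Y k q) (t,y) :=
    DifferentiableAt.fun_sum fun k _ => dk k
  have hsum : pdv v (fun q : SP => ∑ k, Umat i c k * Fc Y k q) (t,y)
      = ∑ k, pdv v (fun q : SP => Umat i c k * Fc Y k q) (t,y) :=
    pdv_sum (G := fun k q => Umat i c k * Fc Y k q) (fun k => dk k) v
  show pdv v (fun q : SP => (q.2 (i+1) * pdv (wv (i+2)) (Fc Y c) q
      - q.2 (i+2) * pdv (wv (i+1)) (Fc Y c) q) + ∑ k, Umat i c k * Fc Y k q) (t,y) = _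
  rw [pdv_add (d1.fun_sub d2) dsum, pdv_sub d1 d2,
    pdv_cj_mul (pdv_diffAt hF (wv (i+2)) (t,y)) (i+1),
    pdv_cj_mul (pdv_diffAt hF (wv (i+1)) (t,y)) (i+2),
    hsum, Fin.sum_univ_three,
    pdv_const_mul (diffAt (hFc hY 0) (t,y)) (Umat i c 0),
    pdv_const_mul (diffAt (hFc hY 1) (t,y)) (Umat i c 1),
    pdv_const_mul (diffAt (hFc hY 2) (t,y)) (Umat i c 2)]

end YSec


lemma entry_le_d1Norm (W : STV) (t : ℝ) (x : Pt) (b : Fin 4) (i : Fin 3) :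
    |Dst b (fun s y => W s y i) t x| ≤ d1Norm W t x := by
  rw [d1Norm, ← Real.sqrt_sq_eq_abs]
  apply Real.sqrt_le_sqrt
  calc (Dst b (fun s y => W s y i) t x)^2
      ≤ ∑ i', (Dst b (fun s y => W s y i') t x)^2 :=
        Finset.single_le_sum (f := fun i' => (Dst b (fun s y => W s y i') t x)^2)
          (fun _ _ => sq_nonneg _) (Finset.mem_univ i)
    _ ≤ ∑ b' : Fin 4, ∑ i', (Dst b' (fun s y => W s y i') t x)^2 :=
        Finset.single_le_sum (f := fun b' : Fin 4 => ∑ i', (Dst b' (fun s y => W s y i') t x)^2)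
          (fun _ _ => Finset.sum_nonneg fun _ _ => sq_nonneg _) (Finset.mem_univ b)

lemma box_le (Y : STV) (t : ℝ) (y : Pt) (c : Fin 3) :
    |Box (fun s z => Y s z c) t y| ≤ Real.sqrt (∑ i, (Box (fun s z => Y s z i) t y)^2) := by
  rw [← Real.sqrt_sq_eq_abs]
  exact Real.sqrt_le_sqrt (Finset.single_le_sum
    (f := fun i => (Box (fun s z => Y s z i) t y)^2) (fun _ _ => sq_nonneg _) (Finset.mem_univ c))

lemma abs_coord_le (x : Pt) (j : Fin 3) : |x j| ≤ ‖x‖ := by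
  rw [EuclideanSpace.norm_eq, ← Real.sqrt_sq_eq_abs]
  apply Real.sqrt_le_sqrt
  calc (x j)^2 = ‖x j‖^2 := by rw [Real.norm_eq_abs, sq_abs]
    _ ≤ ∑ i, ‖x i‖^2 := Finset.single_le_sum (f := fun i => ‖x i‖^2)
        (fun _ _ => sq_nonneg _) (Finset.mem_univ j)

lemma norm_sq_eq (x : Pt) : ‖x‖^2 = (x 0)^2 + (x 1)^2 + (x 2)^2 := by
  rw [EuclideanSpace.norm_eq, Real.sq_sqrt (Finset.sum_nonneg fun _ _ => sq_nonneg _)]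
  simp [Fin.sum_univ_three, Real.norm_eq_abs, sq_abs]

lemma sqrt_sum3_le (f : Fin 3 → ℝ) :
    Real.sqrt (∑ i, (f i)^2) ≤ |f 0| + |f 1| + |f 2| := by
  rw [Fin.sum_univ_three,
    show |f 0| + |f 1| + |f 2| = Real.sqrt ((|f 0| + |f 1| + |f 2|)^2) from
      (Real.sqrt_sq (by positivity)).symm]
  apply Real.sqrt_le_sqrt
  nlinarith [abs_nonneg (f 0), abs_nonneg (f 1), abs_nonneg (f 2), sq_abs (f 0), sq_abs (f 1),
    sq_abs (f 2), mul_nonneg (abs_nonneg (f 0)) (abs_nonneg (f 1)),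
    mul_nonneg (abs_nonneg (f 0)) (abs_nonneg (f 2)),
    mul_nonneg (abs_nonneg (f 1)) (abs_nonneg (f 2))]

lemma sg_apply (k j : Fin 3) : sg k j = if j = k then 1 else 0 := by
  rw [sg, EuclideanSpace.single_apply]

lemma Uabs_le (i c : Fin 3) : |Umat i c 0| + |Umat i c 1| + |Umat i c 2| ≤ 1 := by
  fin_cases i <;> fin_cases c <;> norm_num [Umat, Matrix.cons_val_two, Matrix.tail_cons, Matrix.head_cons]

lemma tri_sub (a b : ℝ) : |a - b| ≤ |a| + |b| := by
  calc |a - b| = |a + -b| := by ring_nf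
    _ ≤ |a| + |-b| := abs_add_le a (-b)
    _ = |a| + |b| := by rw [abs_neg]

lemma tri_add3 (a b c : ℝ) : |a + b + c| ≤ |a| + |b| + |c| := by
  calc |a + b + c| ≤ |a + b| + |c| := abs_add_le _ _
    _ ≤ |a| + |b| + |c| := by linarith [abs_add_le a b]

lemma tri6 (a b c d e f : ℝ) :
    |a - b - c - d - e - f| ≤ |a| + |b| + |c| + |d| + |e| + |f| := by
  have h1 := tri_sub (a - b - c - d - e) f
  have h2 := tri_sub (a - b - c - d) e
  have h3 := tri_sub (a - b - c) d
  have h4 := tri_sub (a - b) c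
  have h5 := tri_sub a b
  linarith

lemma bnd_mul1 {a x R K1 : ℝ} (ha : |a| ≤ R) (hx : |x| ≤ K1) (hR : 0 ≤ R) :
    |a * x| ≤ R * K1 := by
  rw [abs_mul]; exact mul_le_mul ha hx (abs_nonneg _) hR

lemma bnd_mul2 {a x R K1 : ℝ} (ha : |a| ≤ R) (hx : |x| ≤ 2 * K1) (hR : 0 ≤ R) :
    |a * x| ≤ 2 * (R * K1) := by
  have h := mul_le_mul ha hx (abs_nonneg _) hR
  rw [abs_mul]
  rw [show R * (2 * K1) = 2 * (R * K1) by ring] at h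
  exact h

/-- The `U`-matrix contribution to a derivative of a rotation generator entry. -/
def Utri (Y : STV) (i c k : Fin 3) (t : ℝ) (y : Pt) : ℝ :=
  Umat i c 0 * pdv (wv k) (Fc Y 0) (t,y) + Umat i c 1 * pdv (wv k) (Fc Y 1) (t,y)
    + Umat i c 2 * pdv (wv k) (Fc Y 2) (t,y)

lemma comp_bound (Y : STV) (hY : ∀ i, ContDiff ℝ (⊤:ℕ∞) fun q : ℝ × Pt => Y q.1 q.2 i)
    (t : ℝ) (y : Pt) (ht : 0 ≤ t) (hy : 0 < ‖y‖) (K : ℝ)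
    (hzK : ∀ z : Fin 7, d1Norm (Gen z Y) t y ≤ K)
    (hYK : d1Norm Y t y ≤ K)
    (hBK : t * Real.sqrt (∑ i, (Box (fun s z => Y s z i) t y)^2) ≤ K)
    (hKnn : 0 ≤ K) (c : Fin 3) :
    |t - ‖y‖| * |∑ j, Dsp j (Dsp j (fun s z => Y s z c)) t y| ≤ 25 * K := by
  have hR0 : (0:ℝ) ≤ t + ‖y‖ := by linarith
  have hRpos : (0:ℝ) < t + ‖y‖ := by linarith
  have habs_t : |t| ≤ t + ‖y‖ := by rw [abs_of_nonneg ht]; linarith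
  have habs_y : ∀ j, |y j| ≤ t + ‖y‖ := fun j => le_trans (abs_coord_le y j) (by linarith)
  -- first-derivative entry bounds
  have haT : |pdv v0 (Fc Y c) (t,y)| ≤ K := by
    rw [← Dt_eq (hFc hY c) t y]
    exact le_trans (entry_le_d1Norm Y t y 0 c) hYK
  have hsc : ∀ k' k : Fin 3, |pdv (wv k) (Fc Y k') (t,y)| ≤ K := by
    intro k' k
    rw [← Dsp_eq (hFc hY k') k t y]
    fin_cases k
    · exact le_trans (entry_le_d1Norm Y t y 1 k') hYK
    · exact le_trans (entry_le_d1Norm Y t y 2 k') hYK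
    · exact le_trans (entry_le_d1Norm Y t y 3 k') hYK
  have hQ : ∀ i k : Fin 3, |Utri Y i c k t y| ≤ K := by
    intro i k
    have h0 := mul_le_mul_of_nonneg_left (hsc 0 k) (abs_nonneg (Umat i c 0))
    have h1 := mul_le_mul_of_nonneg_left (hsc 1 k) (abs_nonneg (Umat i c 1))
    have h2 := mul_le_mul_of_nonneg_left (hsc 2 k) (abs_nonneg (Umat i c 2))
    have hU := mul_le_mul_of_nonneg_right (Uabs_le i c) hKnn
    have hexp : (|Umat i c 0| + |Umat i c 1| + |Umat i c 2|) * K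
        = |Umat i c 0| * K + |Umat i c 1| * K + |Umat i c 2| * K := by ring
    have htr : |Utri Y i c k t y| ≤ |Umat i c 0| * |pdv (wv k) (Fc Y 0) (t,y)|
        + |Umat i c 1| * |pdv (wv k) (Fc Y 1) (t,y)|
        + |Umat i c 2| * |pdv (wv k) (Fc Y 2) (t,y)| := by
      rw [Utri, ← abs_mul, ← abs_mul, ← abs_mul]
      exact tri_add3 _ _ _
    rw [hexp] at hU
    linarith
  -- generator entry bounds
  have hE6T : |Dt (fun s z => ScT Y s z c) t y| ≤ K :=
    le_trans (entry_le_d1Norm (Gen 6 Y) t y 0 c) (hzK 6)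
  have hE60 : |Dsp 0 (fun s z => ScT Y s z c) t y| ≤ K :=
    le_trans (entry_le_d1Norm (Gen 6 Y) t y 1 c) (hzK 6)
  have hE61 : |Dsp 1 (fun s z => ScT Y s z c) t y| ≤ K :=
    le_trans (entry_le_d1Norm (Gen 6 Y) t y 2 c) (hzK 6)
  have hE62 : |Dsp 2 (fun s z => ScT Y s z c) t y| ≤ K :=
    le_trans (entry_le_d1Norm (Gen 6 Y) t y 3 c) (hzK 6)
  have hEO : ∀ i : Fin 3, ∀ k : Fin 3, |Dsp k (fun s z => OmT i Y s z c) t y| ≤ K := by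
    intro i k
    fin_cases i <;> fin_cases k
    · exact le_trans (entry_le_d1Norm (Gen 3 Y) t y 1 c) (hzK 3)
    · exact le_trans (entry_le_d1Norm (Gen 3 Y) t y 2 c) (hzK 3)
    · exact le_trans (entry_le_d1Norm (Gen 3 Y) t y 3 c) (hzK 3)
    · exact le_trans (entry_le_d1Norm (Gen 4 Y) t y 1 c) (hzK 4)
    · exact le_trans (entry_le_d1Norm (Gen 4 Y) t y 2 c) (hzK 4)
    · exact le_trans (entry_le_d1Norm (Gen 4 Y) t y 3 c) (hzK 4)
    · exact le_trans (entry_le_d1Norm (Gen 5 Y) t y 1 c) (hzK 5)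
    · exact le_trans (entry_le_d1Norm (Gen 5 Y) t y 2 c) (hzK 5)
    · exact le_trans (entry_le_d1Norm (Gen 5 Y) t y 3 c) (hzK 5)
  have hBc : t * |Box (fun s z => Y s z c) t y| ≤ K :=
    le_trans (mul_le_mul_of_nonneg_left (box_le Y t y c) ht) hBK
  -- second-derivative conversions
  have hd0 : Dsp 0 (Dsp 0 (fun s z => Y s z c)) t y
      = pdv (wv 0) (pdv (wv 0) (Fc Y c)) (t,y) := Dsp_Dsp (hY c) 0 0 t y
  have hd1 : Dsp 1 (Dsp 1 (fun s z => Y s z c)) t y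
      = pdv (wv 1) (pdv (wv 1) (Fc Y c)) (t,y) := Dsp_Dsp (hY c) 1 1 t y
  have hd2 : Dsp 2 (Dsp 2 (fun s z => Y s z c)) t y
      = pdv (wv 2) (pdv (wv 2) (Fc Y c)) (t,y) := Dsp_Dsp (hY c) 2 2 t y
  have hL : (∑ j, Dsp j (Dsp j (fun s z => Y s z c)) t y)
      = pdv (wv 0) (pdv (wv 0) (Fc Y c)) (t,y) + pdv (wv 1) (pdv (wv 1) (Fc Y c)) (t,y)
        + pdv (wv 2) (pdv (wv 2) (Fc Y c)) (t,y) := by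
    rw [Fin.sum_univ_three, hd0, hd1, hd2]
  have hDtt : Dt (Dt (fun s z => Y s z c)) t y = pdv v0 (pdv v0 (Fc Y c)) (t,y) :=
    Dt_Dt (hY c) t y
  have hB : Box (fun s z => Y s z c) t y
      = pdv v0 (pdv v0 (Fc Y c)) (t,y)
        - (pdv (wv 0) (pdv (wv 0) (Fc Y c)) (t,y) + pdv (wv 1) (pdv (wv 1) (Fc Y c)) (t,y)
          + pdv (wv 2) (pdv (wv 2) (Fc Y c)) (t,y)) := by
    show Dt (Dt (fun s z => Y s z c)) t y - ∑ j, Dsp j (Dsp j (fun s z => Y s z c)) t y = _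
    rw [hDtt, hL]
  -- commutation of mixed second derivatives
  have ct0 : pdv (wv 0) (pdv v0 (Fc Y c)) (t,y) = pdv v0 (pdv (wv 0) (Fc Y c)) (t,y) :=
    pdv_comm (hY c) (t,y) (wv 0) v0
  have ct1 : pdv (wv 1) (pdv v0 (Fc Y c)) (t,y) = pdv v0 (pdv (wv 1) (Fc Y c)) (t,y) :=
    pdv_comm (hY c) (t,y) (wv 1) v0
  have ct2 : pdv (wv 2) (pdv v0 (Fc Y c)) (t,y) = pdv v0 (pdv (wv 2) (Fc Y c)) (t,y) :=
    pdv_comm (hY c) (t,y) (wv 2) v0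
  have c10 : pdv (wv 1) (pdv (wv 0) (Fc Y c)) (t,y) = pdv (wv 0) (pdv (wv 1) (Fc Y c)) (t,y) :=
    pdv_comm (hY c) (t,y) (wv 1) (wv 0)
  have c20 : pdv (wv 2) (pdv (wv 0) (Fc Y c)) (t,y) = pdv (wv 0) (pdv (wv 2) (Fc Y c)) (t,y) :=
    pdv_comm (hY c) (t,y) (wv 2) (wv 0)
  have c21 : pdv (wv 2) (pdv (wv 1) (Fc Y c)) (t,y) = pdv (wv 1) (pdv (wv 2) (Fc Y c)) (t,y) :=
    pdv_comm (hY c) (t,y) (wv 2) (wv 1)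
  -- expansions of the scaling generator entries
  have e6t : Dt (fun s z => ScT Y s z c) t y
      = t * pdv v0 (pdv v0 (Fc Y c)) (t,y)
        + (y 0 * pdv v0 (pdv (wv 0) (Fc Y c)) (t,y) + y 1 * pdv v0 (pdv (wv 1) (Fc Y c)) (t,y)
          + y 2 * pdv v0 (pdv (wv 2) (Fc Y c)) (t,y)) := by
    rw [ScT_curried hY c, Dt_eq (GS_contDiff hY c) t y, GS_expand hY c t y v0]
    norm_num [show v0.1 = (1:ℝ) from rfl, show ∀ j, v0.2 j = (0:ℝ) from fun _ => rfl]
    ring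
  have e60 : Dsp 0 (fun s z => ScT Y s z c) t y
      = t * pdv (wv 0) (pdv v0 (Fc Y c)) (t,y)
        + (y 0 * pdv (wv 0) (pdv (wv 0) (Fc Y c)) (t,y)
          + y 1 * pdv (wv 0) (pdv (wv 1) (Fc Y c)) (t,y)
          + y 2 * pdv (wv 0) (pdv (wv 2) (Fc Y c)) (t,y)) := by
    rw [ScT_curried hY c, Dsp_eq (GS_contDiff hY c) 0 t y, GS_expand hY c t y (wv 0)]
    norm_num [show (wv 0).1 = (0:ℝ) from rfl, show ∀ j, (wv 0).2 j = sg 0 j from fun _ => rfl,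
      sg_apply, Fin.ext_iff]
    try ring
  have e61 : Dsp 1 (fun s z => ScT Y s z c) t y
      = t * pdv (wv 1) (pdv v0 (Fc Y c)) (t,y)
        + (y 0 * pdv (wv 1) (pdv (wv 0) (Fc Y c)) (t,y)
          + y 1 * pdv (wv 1) (pdv (wv 1) (Fc Y c)) (t,y)
          + y 2 * pdv (wv 1) (pdv (wv 2) (Fc Y c)) (t,y)) := by
    rw [ScT_curried hY c, Dsp_eq (GS_contDiff hY c) 1 t y, GS_expand hY c t y (wv 1)]
    norm_num [show (wv 1).1 = (0:ℝ) from rfl, show ∀ j, (wv 1).2 j = sg 1 j from fun _ => rfl,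
      sg_apply, Fin.ext_iff]
    try ring
  have e62 : Dsp 2 (fun s z => ScT Y s z c) t y
      = t * pdv (wv 2) (pdv v0 (Fc Y c)) (t,y)
        + (y 0 * pdv (wv 2) (pdv (wv 0) (Fc Y c)) (t,y)
          + y 1 * pdv (wv 2) (pdv (wv 1) (Fc Y c)) (t,y)
          + y 2 * pdv (wv 2) (pdv (wv 2) (Fc Y c)) (t,y)) := by
    rw [ScT_curried hY c, Dsp_eq (GS_contDiff hY c) 2 t y, GS_expand hY c t y (wv 2)]
    norm_num [show (wv 2).1 = (0:ℝ) from rfl, show ∀ j, (wv 2).2 j = sg 2 j from fun _ => rfl,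
      sg_apply, Fin.ext_iff]
    try ring
  -- expansions of the rotation generator entries
  have eo01 : Dsp 1 (fun s z => OmT 0 Y s z c) t y
      = pdv (wv 2) (Fc Y c) (t,y) + y 1 * pdv (wv 1) (pdv (wv 2) (Fc Y c)) (t,y)
        - y 2 * pdv (wv 1) (pdv (wv 1) (Fc Y c)) (t,y) + Utri Y 0 c 1 t y := by
    rw [OmT_curried hY 0 c, Dsp_eq (GO_contDiff hY 0 c) 1 t y, GO_expand hY 0 c t y (wv 1)]
    simp only [Fin.isValue, Fin.reduceAdd]
    norm_num [Utri, show ∀ j, (wv 1).2 j = sg 1 j from fun _ => rfl, sg_apply, Fin.ext_iff]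
    try ring
  have eo02 : Dsp 2 (fun s z => OmT 0 Y s z c) t y
      = - pdv (wv 1) (Fc Y c) (t,y) + y 1 * pdv (wv 2) (pdv (wv 2) (Fc Y c)) (t,y)
        - y 2 * pdv (wv 2) (pdv (wv 1) (Fc Y c)) (t,y) + Utri Y 0 c 2 t y := by
    rw [OmT_curried hY 0 c, Dsp_eq (GO_contDiff hY 0 c) 2 t y, GO_expand hY 0 c t y (wv 2)]
    simp only [Fin.isValue, Fin.reduceAdd]
    norm_num [Utri, show ∀ j, (wv 2).2 j = sg 2 j from fun _ => rfl, sg_apply, Fin.ext_iff]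
    try ring
  have eo10 : Dsp 0 (fun s z => OmT 1 Y s z c) t y
      = - pdv (wv 2) (Fc Y c) (t,y) + y 2 * pdv (wv 0) (pdv (wv 0) (Fc Y c)) (t,y)
        - y 0 * pdv (wv 0) (pdv (wv 2) (Fc Y c)) (t,y) + Utri Y 1 c 0 t y := by
    rw [OmT_curried hY 1 c, Dsp_eq (GO_contDiff hY 1 c) 0 t y, GO_expand hY 1 c t y (wv 0)]
    simp only [Fin.isValue, Fin.reduceAdd]
    norm_num [Utri, show ∀ j, (wv 0).2 j = sg 0 j from fun _ => rfl, sg_apply, Fin.ext_iff]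
    try ring
  have eo12 : Dsp 2 (fun s z => OmT 1 Y s z c) t y
      = pdv (wv 0) (Fc Y c) (t,y) + y 2 * pdv (wv 2) (pdv (wv 0) (Fc Y c)) (t,y)
        - y 0 * pdv (wv 2) (pdv (wv 2) (Fc Y c)) (t,y) + Utri Y 1 c 2 t y := by
    rw [OmT_curried hY 1 c, Dsp_eq (GO_contDiff hY 1 c) 2 t y, GO_expand hY 1 c t y (wv 2)]
    simp only [Fin.isValue, Fin.reduceAdd]
    norm_num [Utri, show ∀ j, (wv 2).2 j = sg 2 j from fun _ => rfl, sg_apply, Fin.ext_iff]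
    try ring
  have eo20 : Dsp 0 (fun s z => OmT 2 Y s z c) t y
      = pdv (wv 1) (Fc Y c) (t,y) + y 0 * pdv (wv 0) (pdv (wv 1) (Fc Y c)) (t,y)
        - y 1 * pdv (wv 0) (pdv (wv 0) (Fc Y c)) (t,y) + Utri Y 2 c 0 t y := by
    rw [OmT_curried hY 2 c, Dsp_eq (GO_contDiff hY 2 c) 0 t y, GO_expand hY 2 c t y (wv 0)]
    simp only [Fin.isValue, Fin.reduceAdd]
    norm_num [Utri, show ∀ j, (wv 0).2 j = sg 0 j from fun _ => rfl, sg_apply, Fin.ext_iff]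
    try ring
  have eo21 : Dsp 1 (fun s z => OmT 2 Y s z c) t y
      = - pdv (wv 0) (Fc Y c) (t,y) + y 0 * pdv (wv 1) (pdv (wv 1) (Fc Y c)) (t,y)
        - y 1 * pdv (wv 1) (pdv (wv 0) (Fc Y c)) (t,y) + Utri Y 2 c 1 t y := by
    rw [OmT_curried hY 2 c, Dsp_eq (GO_contDiff hY 2 c) 1 t y, GO_expand hY 2 c t y (wv 1)]
    simp only [Fin.isValue, Fin.reduceAdd]
    norm_num [Utri, show ∀ j, (wv 1).2 j = sg 1 j from fun _ => rfl, sg_apply, Fin.ext_iff]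
    try ring
  -- the key identity
  have hid : (t^2 - ‖y‖^2) * (∑ j, Dsp j (Dsp j (fun s z => Y s z c)) t y)
      = t * (Dt (fun s z => ScT Y s z c) t y + pdv v0 (Fc Y c) (t,y))
        - t * pdv v0 (Fc Y c) (t,y)
        - (y 0 * (Dsp 0 (fun s z => ScT Y s z c) t y + pdv (wv 0) (Fc Y c) (t,y))
          + y 1 * (Dsp 1 (fun s z => ScT Y s z c) t y + pdv (wv 1) (Fc Y c) (t,y))
          + y 2 * (Dsp 2 (fun s z => ScT Y s z c) t y + pdv (wv 2) (Fc Y c) (t,y)))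
        - ((y 1 * (Dsp 2 (fun s z => OmT 0 Y s z c) t y - Utri Y 0 c 2 t y)
            - y 2 * (Dsp 1 (fun s z => OmT 0 Y s z c) t y - Utri Y 0 c 1 t y))
          + (y 2 * (Dsp 0 (fun s z => OmT 1 Y s z c) t y - Utri Y 1 c 0 t y)
            - y 0 * (Dsp 2 (fun s z => OmT 1 Y s z c) t y - Utri Y 1 c 2 t y))
          + (y 0 * (Dsp 1 (fun s z => OmT 2 Y s z c) t y - Utri Y 2 c 1 t y)
            - y 1 * (Dsp 0 (fun s z => OmT 2 Y s z c) t y - Utri Y 2 c 0 t y)))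
        - (y 0 * pdv (wv 0) (Fc Y c) (t,y) + y 1 * pdv (wv 1) (Fc Y c) (t,y)
          + y 2 * pdv (wv 2) (Fc Y c) (t,y))
        - t^2 * Box (fun s z => Y s z c) t y := by
    rw [norm_sq_eq y, hL, hB, e6t, e60, e61, e62, eo01, eo02, eo10, eo12, eo20, eo21]
    simp only [ct0, ct1, ct2, c10, c20, c21]
    ring
  -- piece bounds
  have hT1 : |t * (Dt (fun s z => ScT Y s z c) t y + pdv v0 (Fc Y c) (t,y))|
      ≤ 2 * ((t + ‖y‖) * K) :=
    bnd_mul2 habs_t (le_trans (abs_add_le _ _) (by linarith [hE6T, haT])) hR0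
  have hT2 : |t * pdv v0 (Fc Y c) (t,y)| ≤ (t + ‖y‖) * K := bnd_mul1 habs_t haT hR0
  have hT30 : |y 0 * (Dsp 0 (fun s z => ScT Y s z c) t y + pdv (wv 0) (Fc Y c) (t,y))|
      ≤ 2 * ((t + ‖y‖) * K) :=
    bnd_mul2 (habs_y 0) (le_trans (abs_add_le _ _) (by linarith [hE60, hsc c 0])) hR0
  have hT31 : |y 1 * (Dsp 1 (fun s z => ScT Y s z c) t y + pdv (wv 1) (Fc Y c) (t,y))|
      ≤ 2 * ((t + ‖y‖) * K) :=
    bnd_mul2 (habs_y 1) (le_trans (abs_add_le _ _) (by linarith [hE61, hsc c 1])) hR0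
  have hT32 : |y 2 * (Dsp 2 (fun s z => ScT Y s z c) t y + pdv (wv 2) (Fc Y c) (t,y))|
      ≤ 2 * ((t + ‖y‖) * K) :=
    bnd_mul2 (habs_y 2) (le_trans (abs_add_le _ _) (by linarith [hE62, hsc c 2])) hR0
  have hT4a : |y 1 * (Dsp 2 (fun s z => OmT 0 Y s z c) t y - Utri Y 0 c 2 t y)|
      ≤ 2 * ((t + ‖y‖) * K) :=
    bnd_mul2 (habs_y 1) (le_trans (tri_sub _ _) (by linarith [hEO 0 2, hQ 0 2])) hR0
  have hT4b : |y 2 * (Dsp 1 (fun s z => OmT 0 Y s z c) t y - Utri Y 0 c 1 t y)|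
      ≤ 2 * ((t + ‖y‖) * K) :=
    bnd_mul2 (habs_y 2) (le_trans (tri_sub _ _) (by linarith [hEO 0 1, hQ 0 1])) hR0
  have hT4c : |y 2 * (Dsp 0 (fun s z => OmT 1 Y s z c) t y - Utri Y 1 c 0 t y)|
      ≤ 2 * ((t + ‖y‖) * K) :=
    bnd_mul2 (habs_y 2) (le_trans (tri_sub _ _) (by linarith [hEO 1 0, hQ 1 0])) hR0
  have hT4d : |y 0 * (Dsp 2 (fun s z => OmT 1 Y s z c) t y - Utri Y 1 c 2 t y)|
      ≤ 2 * ((t + ‖y‖) * K) :=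
    bnd_mul2 (habs_y 0) (le_trans (tri_sub _ _) (by linarith [hEO 1 2, hQ 1 2])) hR0
  have hT4e : |y 0 * (Dsp 1 (fun s z => OmT 2 Y s z c) t y - Utri Y 2 c 1 t y)|
      ≤ 2 * ((t + ‖y‖) * K) :=
    bnd_mul2 (habs_y 0) (le_trans (tri_sub _ _) (by linarith [hEO 2 1, hQ 2 1])) hR0
  have hT4f : |y 1 * (Dsp 0 (fun s z => OmT 2 Y s z c) t y - Utri Y 2 c 0 t y)|
      ≤ 2 * ((t + ‖y‖) * K) :=
    bnd_mul2 (habs_y 1) (le_trans (tri_sub _ _) (by linarith [hEO 2 0, hQ 2 0])) hR0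
  have hT50 : |y 0 * pdv (wv 0) (Fc Y c) (t,y)| ≤ (t + ‖y‖) * K :=
    bnd_mul1 (habs_y 0) (hsc c 0) hR0
  have hT51 : |y 1 * pdv (wv 1) (Fc Y c) (t,y)| ≤ (t + ‖y‖) * K :=
    bnd_mul1 (habs_y 1) (hsc c 1) hR0
  have hT52 : |y 2 * pdv (wv 2) (Fc Y c) (t,y)| ≤ (t + ‖y‖) * K :=
    bnd_mul1 (habs_y 2) (hsc c 2) hR0
  have hT6 : |t^2 * Box (fun s z => Y s z c) t y| ≤ (t + ‖y‖) * K := by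
    rw [abs_mul, abs_of_nonneg (sq_nonneg t),
      show t^2 * |Box (fun s z => Y s z c) t y| = t * (t * |Box (fun s z => Y s z c) t y|)
        by ring]
    exact mul_le_mul (by linarith) hBc (mul_nonneg ht (abs_nonneg _)) hR0
  -- combine
  have hmain : |t - ‖y‖| * |∑ j, Dsp j (Dsp j (fun s z => Y s z c)) t y| * (t + ‖y‖)
      ≤ 25 * ((t + ‖y‖) * K) := by
    have heq : |t - ‖y‖| * |∑ j, Dsp j (Dsp j (fun s z => Y s z c)) t y| * (t + ‖y‖)
        = |(t^2 - ‖y‖^2) * (∑ j, Dsp j (Dsp j (fun s z => Y s z c)) t y)| := by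
      rw [show t^2 - ‖y‖^2 = (t - ‖y‖) * (t + ‖y‖) by ring, abs_mul, abs_mul,
        abs_of_nonneg hR0]
      ring
    rw [heq, hid]
    refine le_trans (tri6 _ _ _ _ _ _) ?_
    have h3 := tri_add3
      (y 0 * (Dsp 0 (fun s z => ScT Y s z c) t y + pdv (wv 0) (Fc Y c) (t,y)))
      (y 1 * (Dsp 1 (fun s z => ScT Y s z c) t y + pdv (wv 1) (Fc Y c) (t,y)))
      (y 2 * (Dsp 2 (fun s z => ScT Y s z c) t y + pdv (wv 2) (Fc Y c) (t,y)))
    have h4 := tri_add3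
      (y 1 * (Dsp 2 (fun s z => OmT 0 Y s z c) t y - Utri Y 0 c 2 t y)
        - y 2 * (Dsp 1 (fun s z => OmT 0 Y s z c) t y - Utri Y 0 c 1 t y))
      (y 2 * (Dsp 0 (fun s z => OmT 1 Y s z c) t y - Utri Y 1 c 0 t y)
        - y 0 * (Dsp 2 (fun s z => OmT 1 Y s z c) t y - Utri Y 1 c 2 t y))
      (y 0 * (Dsp 1 (fun s z => OmT 2 Y s z c) t y - Utri Y 2 c 1 t y)
        - y 1 * (Dsp 0 (fun s z => OmT 2 Y s z c) t y - Utri Y 2 c 0 t y))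
    have h4a := tri_sub
      (y 1 * (Dsp 2 (fun s z => OmT 0 Y s z c) t y - Utri Y 0 c 2 t y))
      (y 2 * (Dsp 1 (fun s z => OmT 0 Y s z c) t y - Utri Y 0 c 1 t y))
    have h4b := tri_sub
      (y 2 * (Dsp 0 (fun s z => OmT 1 Y s z c) t y - Utri Y 1 c 0 t y))
      (y 0 * (Dsp 2 (fun s z => OmT 1 Y s z c) t y - Utri Y 1 c 2 t y))
    have h4c := tri_sub
      (y 0 * (Dsp 1 (fun s z => OmT 2 Y s z c) t y - Utri Y 2 c 1 t y))
      (y 1 * (Dsp 0 (fun s z => OmT 2 Y s z c) t y - Utri Y 2 c 0 t y))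
    have h5 := tri_add3
      (y 0 * pdv (wv 0) (Fc Y c) (t,y)) (y 1 * pdv (wv 1) (Fc Y c) (t,y))
      (y 2 * pdv (wv 2) (Fc Y c) (t,y))
    linarith
  have hfin : |t - ‖y‖| * |∑ j, Dsp j (Dsp j (fun s z => Y s z c)) t y| * (t + ‖y‖)
      ≤ (25 * K) * (t + ‖y‖) := by
    rw [show (25 * K) * (t + ‖y‖) = 25 * ((t + ‖y‖) * K) by ring]
    exact hmain
  exact le_of_mul_le_mul_right hfin hRpos


theorem weighted_laplacian_estimate :
    ∃ C : ℝ, 0 < C ∧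
      ∀ Y : STV,
        (∀ i, ContDiff ℝ (⊤ : ℕ∞) fun q : ℝ × Pt => Y q.1 q.2 i) →
        ∀ (t : ℝ) (y : Pt), 0 ≤ t → 0 < ‖y‖ →
          |t - ‖y‖| * Real.sqrt (∑ i, ((∑ j, Dsp j (Dsp j (fun s z => Y s z i)) t y))^2) ≤
            C * ((∑ z : Fin 7, d1Norm (Gen z Y) t y) + d1Norm Y t y
                + t * Real.sqrt (∑ i, (Box (fun s z => Y s z i) t y)^2)) := by
  refine ⟨75, by norm_num, ?_⟩
  intro Y hY t y ht hy
  set K := (∑ z : Fin 7, d1Norm (Gen z Y) t y) + d1Norm Y t y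
      + t * Real.sqrt (∑ i, (Box (fun s z => Y s z i) t y)^2) with hK
  have hz0 : ∀ z : Fin 7, 0 ≤ d1Norm (Gen z Y) t y := fun z => Real.sqrt_nonneg _
  have h1 : 0 ≤ ∑ z' : Fin 7, d1Norm (Gen z' Y) t y := Finset.sum_nonneg fun z' _ => hz0 z'
  have h2 : 0 ≤ d1Norm Y t y := Real.sqrt_nonneg _
  have h3 : 0 ≤ t * Real.sqrt (∑ i, (Box (fun s z => Y s z i) t y)^2) :=
    mul_nonneg ht (Real.sqrt_nonneg _)
  have hzK : ∀ z : Fin 7, d1Norm (Gen z Y) t y ≤ K := by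
    intro z
    have h4 : d1Norm (Gen z Y) t y ≤ ∑ z' : Fin 7, d1Norm (Gen z' Y) t y :=
      Finset.single_le_sum (f := fun z' => d1Norm (Gen z' Y) t y) (fun z' _ => hz0 z')
        (Finset.mem_univ z)
    rw [hK]; linarith
  have hYK : d1Norm Y t y ≤ K := by rw [hK]; linarith
  have hBK : t * Real.sqrt (∑ i, (Box (fun s z => Y s z i) t y)^2) ≤ K := by rw [hK]; linarith
  have hKnn : 0 ≤ K := le_trans h2 hYK
  have hc0 := comp_bound Y hY t y ht hy K hzK hYK hBK hKnn 0
  have hc1 := comp_bound Y hY t y ht hy K hzK hYK hBK hKnn 1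
  have hc2 := comp_bound Y hY t y ht hy K hzK hYK hBK hKnn 2
  have hsq : Real.sqrt (∑ i, ((∑ j, Dsp j (Dsp j (fun s z => Y s z i)) t y))^2)
      ≤ |∑ j, Dsp j (Dsp j (fun s z => Y s z 0)) t y|
        + |∑ j, Dsp j (Dsp j (fun s z => Y s z 1)) t y|
        + |∑ j, Dsp j (Dsp j (fun s z => Y s z 2)) t y| :=
    sqrt_sum3_le (fun i => ∑ j, Dsp j (Dsp j (fun s z => Y s z i)) t y)
  calc |t - ‖y‖| * Real.sqrt (∑ i, ((∑ j, Dsp j (Dsp j (fun s z => Y s z i)) t y))^2)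
      ≤ |t - ‖y‖| * (|∑ j, Dsp j (Dsp j (fun s z => Y s z 0)) t y|
        + |∑ j, Dsp j (Dsp j (fun s z => Y s z 1)) t y|
        + |∑ j, Dsp j (Dsp j (fun s z => Y s z 2)) t y|) :=
        mul_le_mul_of_nonneg_left hsq (abs_nonneg _)
    _ = |t - ‖y‖| * |∑ j, Dsp j (Dsp j (fun s z => Y s z 0)) t y|
        + |t - ‖y‖| * |∑ j, Dsp j (Dsp j (fun s z => Y s z 1)) t y|
        + |t - ‖y‖| * |∑ j, Dsp j (Dsp j (fun s z => Y s z 2)) t y| := by ring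
    _ ≤ 75 * K := by linarith

end Stmt14
end
end

section
/- Let (Y, p) be smooth on an open subset of ℝ × ℝ³, with Y ℝ³-valued and p scalar, satisfying the elastodynamic equation ∂_t²Y − ΔY = −∇p − (∇Y)^⊤(∂_t² − Δ)Y. Then, with S = t∂_t + r∂_r and S̃Y = (S − 1)Y: (∂_t² − Δ)(S̃Y) = −(∇S̃Y)^⊤(∂_t² − Δ)Y − (∇Y)^⊤(∂_t² − Δ)(S̃Y) − ∇(S p). -/
/-!
STATEMENT 19: Commutation of the elastodynamic equations with the modified
scaling S̃ = S − 1 (equation (2-3)): if ∂_t²Y − ΔY = −∇p − (∇Y)^⊤(∂_t² − Δ)Y on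
an open set, then
(∂_t² − Δ)(S̃Y) = −(∇S̃Y)^⊤(∂_t² − Δ)Y − (∇Y)^⊤(∂_t² − Δ)(S̃Y) − ∇(S p).
-/

noncomputable section

namespace Stmt19

abbrev Pt : Type := EuclideanSpace ℝ (Fin 3)

/-- Scalar space-time functions. -/
abbrev STF : Type := ℝ → Pt → ℝ

/-- ℝ³-valued space-time functions. -/
abbrev STV : Type := ℝ → Pt → Fin 3 → ℝ

def pd (j : Fin 3) (f : Pt → ℝ) : Pt → ℝ :=
  fun x => fderiv ℝ f x (EuclideanSpace.single j 1)

/-- Time derivative ∂_t. -/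
def Dt (f : STF) : STF := fun t x => deriv (fun s => f s x) t

/-- Spatial derivative ∂_j. -/
def Dsp (j : Fin 3) (f : STF) : STF := fun t x => pd j (f t) x

/-- All space-time first derivatives ∂ = (∂_t, ∂₁, ∂₂, ∂₃). -/
def Dst : Fin 4 → STF → STF := ![Dt, Dsp 0, Dsp 1, Dsp 2]

/-- The wave operator ∂_t² − Δ. -/
def Box (f : STF) : STF := fun t x => Dt (Dt f) t x - ∑ j, Dsp j (Dsp j f) t x

/-- The rotation operators Ω = y ∧ ∇ : Ωᵢ = y_{i+1}∂_{i+2} − y_{i+2}∂_{i+1} (cyclic). -/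
def Om (i : Fin 3) (f : STF) : STF :=
  fun t x => x (i+1) * Dsp (i+2) f t x - x (i+2) * Dsp (i+1) f t x

/-- The scaling operator S = t∂_t + r∂_r = t∂_t + Σ_j y_j ∂_j. -/
def Sc (f : STF) : STF := fun t x => t * Dt f t x + ∑ j, x j * Dsp j f t x

/-- The matrices U₁, U₂, U₃. -/
def Umat : Fin 3 → Matrix (Fin 3) (Fin 3) ℝ :=
  ![!![0,0,0; 0,0,1; 0,-1,0], !![0,0,-1; 0,0,0; 1,0,0], !![0,1,0; -1,0,0; 0,0,0]]

/-- Componentwise application of a scalar operator to a vector field. -/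
def mapc (T : STF → STF) (Y : STV) : STV := fun t x i => T (fun s y => Y s y i) t x

/-- The modified rotations Ω̃ᵢY = ΩᵢY + UᵢY. -/
def OmT (i : Fin 3) (Y : STV) : STV :=
  fun t x j => Om i (fun s y => Y s y j) t x + ∑ k, Umat i j k * Y t x k

/-- The modified scaling S̃Y = (S − 1)Y. -/
def ScT (Y : STV) : STV := fun t x j => Sc (fun s y => Y s y j) t x - Y t x j

/-- The seven generators {∂_t, ∂₁, ∂₂, Ω̃₁, Ω̃₂, Ω̃₃, S̃} acting on vector fields. -/
def Gen : Fin 7 → STV → STV :=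
  ![mapc Dt, mapc (Dsp 0), mapc (Dsp 1), OmT 0, OmT 1, OmT 2, ScT]

abbrev E' : Type := ℝ × Pt
def dl (v : E') (F : E' → ℝ) : E' → ℝ := fun q => fderiv ℝ F q v
def e0 : E' := (1, 0)
def ee (j : Fin 3) : E' := (0, EuclideanSpace.single j 1)
def cproj (j : Fin 3) : E' →L[ℝ] ℝ :=
  (EuclideanSpace.proj j).comp (ContinuousLinearMap.snd ℝ ℝ Pt)

/-- S on the product-space level. -/
def SC' (F : E' → ℝ) : E' → ℝ := fun q => q.1 * dl e0 F q + ∑ j, q.2 j * dl (ee j) F q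
/-- Box on the product-space level. -/
def BX' (F : E' → ℝ) : E' → ℝ := fun q => dl e0 (dl e0 F) q - ∑ j, dl (ee j) (dl (ee j) F) q

variable {Uset : Set E'} (hU : IsOpen Uset)

/-- Shorthand for smooth on Uset. -/
def Sm (Uset : Set E') (F : E' → ℝ) : Prop := ContDiffOn ℝ (⊤:ℕ∞) F Uset

section basic
include hU

theorem Sm.dl {F : E' → ℝ} (hF : Sm Uset F) (v : E') : Sm Uset (dl v F) := by
  have h := hF.fderiv_of_isOpen hU (m := (⊤:ℕ∞)) (by exact_mod_cast le_rfl)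
  exact h.clm_apply contDiffOn_const

theorem Sm.diffAt {F : E' → ℝ} (hF : Sm Uset F) {q : E'} (hq : q ∈ Uset) :
    DifferentiableAt ℝ F q :=
  ((hF q hq).contDiffAt (hU.mem_nhds hq)).differentiableAt
    (by simp)

theorem dl_symm {F : E' → ℝ} (hF : Sm Uset F) {q : E'} (hq : q ∈ Uset)
    (v w : E') : dl v (dl w F) q = dl w (dl v F) q := by
  have hd : DifferentiableAt ℝ (fderiv ℝ F) q := by
    have h := hF.fderiv_of_isOpen hU (m := (⊤:ℕ∞)) (by exact_mod_cast le_rfl)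
    exact ((h q hq).contDiffAt (hU.mem_nhds hq)).differentiableAt
      (by simp)
  have hsymm : IsSymmSndFDerivAt ℝ F q :=
    ((hF q hq).contDiffAt (hU.mem_nhds hq)).isSymmSndFDerivAt
      (by rw [minSmoothness_of_isRCLikeNormedField]; exact WithTop.coe_le_coe.2 (le_top : (2:ℕ∞) ≤ ⊤))
  have key : ∀ a b : E', dl a (dl b F) q = fderiv ℝ (fderiv ℝ F) q a b := by
    intro a b
    have h2 : (fun p => fderiv ℝ F p b) = fun p => (fderiv ℝ F p) ((fun _ => b) p) := rfl
    show fderiv ℝ (fun p => fderiv ℝ F p b) q a = _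
    conv_lhs => rw [h2, fderiv_clm_apply hd (differentiableAt_const b)]
    simp
  rw [key, key, hsymm v w]

theorem dl_congr {F G : E' → ℝ} (h : ∀ q' ∈ Uset, F q' = G q') {q : E'} (hq : q ∈ Uset)
    (v : E') : dl v F q = dl v G q := by
  have : F =ᶠ[nhds q] G := Filter.eventuallyEq_of_mem (hU.mem_nhds hq) h
  simp only [dl, this.fderiv_eq]

end basic

theorem dl_add {F G : E' → ℝ} {q : E'} (hF : DifferentiableAt ℝ F q)
    (hG : DifferentiableAt ℝ G q) (v : E') :
    dl v (fun q' => F q' + G q') q = dl v F q + dl v G q := by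
  simp [dl, fderiv_fun_add hF hG]

theorem dl_sub {F G : E' → ℝ} {q : E'} (hF : DifferentiableAt ℝ F q)
    (hG : DifferentiableAt ℝ G q) (v : E') :
    dl v (fun q' => F q' - G q') q = dl v F q - dl v G q := by
  simp [dl, fderiv_fun_sub hF hG]

theorem dl_neg {F : E' → ℝ} {q : E'} (v : E') :
    dl v (fun q' => -F q') q = -dl v F q := by
  simp [dl, fderiv_neg]

theorem dl_sum {ι : Type*} {s : Finset ι} {F : ι → E' → ℝ} {q : E'}
    (hF : ∀ i ∈ s, DifferentiableAt ℝ (F i) q) (v : E') :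
    dl v (fun q' => ∑ i ∈ s, F i q') q = ∑ i ∈ s, dl v (F i) q := by
  simp [dl, fderiv_fun_sum hF]

theorem dl_mul {F G : E' → ℝ} {q : E'} (hF : DifferentiableAt ℝ F q)
    (hG : DifferentiableAt ℝ G q) (v : E') :
    dl v (fun q' => F q' * G q') q = dl v F q * G q + F q * dl v G q := by
  simp [dl, fderiv_fun_mul hF hG]; ring

theorem dl_coord {q : E'} (v : E') (j : Fin 3) :
    dl v (fun q' : E' => q'.2 j) q = v.2 j := by
  show fderiv ℝ (cproj j) q v = v.2 j
  rw [ContinuousLinearMap.fderiv]; rfl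

theorem dl_fst {q : E'} (v : E') : dl v (fun q' : E' => q'.1) q = v.1 := by
  show fderiv ℝ Prod.fst q v = v.1
  rw [fderiv_fst]; rfl

theorem diff_fst {q : E'} : DifferentiableAt ℝ (fun q' : E' => q'.1) q :=
  differentiableAt_fst

theorem diff_coord {q : E'} (j : Fin 3) : DifferentiableAt ℝ (fun q' : E' => q'.2 j) q :=
  (cproj j).differentiableAt

theorem sm_fst : Sm Uset (fun q' : E' => q'.1) := contDiff_fst.contDiffOn

theorem sm_coord (j : Fin 3) : Sm Uset (fun q' : E' => q'.2 j) :=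
  (cproj j).contDiff.contDiffOn

theorem Sm.mul {F G : E' → ℝ} (hF : Sm Uset F) (hG : Sm Uset G) :
    Sm Uset (fun q' => F q' * G q') := ContDiffOn.mul hF hG

theorem Sm.add {F G : E' → ℝ} (hF : Sm Uset F) (hG : Sm Uset G) :
    Sm Uset (fun q' => F q' + G q') := ContDiffOn.add hF hG

theorem Sm.sub {F G : E' → ℝ} (hF : Sm Uset F) (hG : Sm Uset G) :
    Sm Uset (fun q' => F q' - G q') := ContDiffOn.sub hF hG

theorem Sm.neg {F : E' → ℝ} (hF : Sm Uset F) : Sm Uset (fun q' => -F q') :=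
  ContDiffOn.neg hF

theorem Sm.sum {ι : Type*} {s : Finset ι} {F : ι → E' → ℝ}
    (hF : ∀ i ∈ s, Sm Uset (F i)) : Sm Uset (fun q' => ∑ i ∈ s, F i q') :=
  ContDiffOn.sum hF

section ops
include hU

theorem Sm.sc {F : E' → ℝ} (hF : Sm Uset F) : Sm Uset (SC' F) :=
  ((sm_fst.mul (hF.dl hU e0)).add
    (Sm.sum fun j _ => (sm_coord j).mul (hF.dl hU (ee j))))

theorem Sm.bx {F : E' → ℝ} (hF : Sm Uset F) : Sm Uset (BX' F) :=
  (((hF.dl hU e0).dl hU e0).sub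
    (Sm.sum fun j _ => ((hF.dl hU (ee j)).dl hU (ee j))))

/-- The fundamental first-order commutation: [∂_v, S] = ∂_{(v.1, v.2)} pieces. -/
theorem dl_SC {F : E' → ℝ} (hF : Sm Uset F) {q : E'} (hq : q ∈ Uset) (v : E') :
    dl v (SC' F) q = SC' (dl v F) q + v.1 * dl e0 F q + ∑ j, v.2 j * dl (ee j) F q := by
  have hd0 : DifferentiableAt ℝ (dl e0 F) q := (hF.dl hU e0).diffAt hU hq
  have hdj : ∀ j : Fin 3, DifferentiableAt ℝ (dl (ee j) F) q :=
    fun j => (hF.dl hU (ee j)).diffAt hU hq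
  have h1 : dl v (SC' F) q
      = dl v (fun q' => q'.1 * dl e0 F q') q
        + ∑ j, dl v (fun q' => q'.2 j * dl (ee j) F q') q := by
    rw [show SC' F = fun q' => (fun q'' => q''.1 * dl e0 F q'') q'
        + (fun q'' => ∑ j, q''.2 j * dl (ee j) F q'') q' from rfl]
    rw [dl_add (diff_fst.fun_mul hd0)
      (DifferentiableAt.fun_sum fun j _ => (diff_coord j).fun_mul (hdj j)) v]
    rw [dl_sum (fun j _ => (diff_coord j).fun_mul (hdj j)) v]
  rw [h1, dl_mul diff_fst hd0, dl_fst]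
  have h2 : ∀ j : Fin 3, dl v (fun q' => q'.2 j * dl (ee j) F q') q
      = v.2 j * dl (ee j) F q + q.2 j * dl (ee j) (dl v F) q := by
    intro j
    rw [dl_mul (diff_coord j) (hdj j), dl_coord, dl_symm hU hF hq v (ee j)]
  simp only [h2, dl_symm hU hF hq v e0]
  simp only [SC', Finset.sum_add_distrib]
  ring

theorem dl_SC_e0 {F : E' → ℝ} (hF : Sm Uset F) {q : E'} (hq : q ∈ Uset) :
    dl e0 (SC' F) q = SC' (dl e0 F) q + dl e0 F q := by
  rw [dl_SC hU hF hq e0]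
  simp [e0]

theorem dl_SC_ee {F : E' → ℝ} (hF : Sm Uset F) {q : E'} (hq : q ∈ Uset) (i : Fin 3) :
    dl (ee i) (SC' F) q = SC' (dl (ee i) F) q + dl (ee i) F q := by
  rw [dl_SC hU hF hq (ee i)]
  have : ∀ j : Fin 3, (ee i).2 j = if j = i then 1 else 0 := by
    intro j; simp [ee, EuclideanSpace.single_apply]
  simp only [this, ite_mul, one_mul, zero_mul, Finset.sum_ite_eq', Finset.mem_univ,
    if_true]
  simp [ee]

/-- Second commutation for v = e0 or ee i, uniform version. -/
theorem dl_dl_SC {F : E' → ℝ} (hF : Sm Uset F) {q : E'} (hq : q ∈ Uset) (v : E')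
    (hv : ∀ (G : E' → ℝ), Sm Uset G → ∀ q' ∈ Uset,
      dl v (SC' G) q' = SC' (dl v G) q' + dl v G q') :
    dl v (dl v (SC' F)) q = SC' (dl v (dl v F)) q + 2 * dl v (dl v F) q := by
  have hG : Sm Uset (dl v F) := hF.dl hU v
  have h1 : dl v (dl v (SC' F)) q
      = dl v (fun q' => SC' (dl v F) q' + dl v F q') q :=
    dl_congr hU (fun q' hq' => hv F hF q' hq') hq v
  rw [h1, dl_add ((hG.sc hU).diffAt hU hq) (hG.diffAt hU hq) v, hv (dl v F) hG q hq]
  ring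

theorem SC'_sub_sum {A : E' → ℝ} {B : Fin 3 → E' → ℝ} (hA : Sm Uset A)
    (hB : ∀ j, Sm Uset (B j)) {q : E'} (hq : q ∈ Uset) :
    SC' (fun q' => A q' - ∑ j, B j q') q = SC' A q - ∑ j, SC' (B j) q := by
  have hdiff : ∀ (v : E'), dl v (fun q' => A q' - ∑ j, B j q') q
      = dl v A q - ∑ j, dl v (B j) q := by
    intro v
    rw [show (fun q' => A q' - ∑ j, B j q')
        = fun q' => A q' - (fun q'' => ∑ j, B j q'') q' from rfl]
    rw [dl_sub (hA.diffAt hU hq)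
      (DifferentiableAt.fun_sum fun j _ => (hB j).diffAt hU hq) v,
      dl_sum (fun j _ => (hB j).diffAt hU hq) v]
  simp only [SC', hdiff]
  simp only [Fin.sum_univ_three]
  ring

/-- [Box, S] = 2 Box at points of Uset. -/
theorem BX_SC {F : E' → ℝ} (hF : Sm Uset F) {q : E'} (hq : q ∈ Uset) :
    BX' (SC' F) q = SC' (BX' F) q + 2 * BX' F q := by
  have h0 : dl e0 (dl e0 (SC' F)) q
      = SC' (dl e0 (dl e0 F)) q + 2 * dl e0 (dl e0 F) q :=
    dl_dl_SC hU hF hq e0 (fun G hG q' hq' => dl_SC_e0 hU hG hq')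
  have hj : ∀ j : Fin 3, dl (ee j) (dl (ee j) (SC' F)) q
      = SC' (dl (ee j) (dl (ee j) F)) q + 2 * dl (ee j) (dl (ee j) F) q :=
    fun j => dl_dl_SC hU hF hq (ee j) (fun G hG q' hq' => dl_SC_ee hU hG hq' j)
  have hBX : BX' F = fun q' => dl e0 (dl e0 F) q' - ∑ j, dl (ee j) (dl (ee j) F) q' := rfl
  rw [show BX' (SC' F) q = dl e0 (dl e0 (SC' F)) q
      - ∑ j, dl (ee j) (dl (ee j) (SC' F)) q from rfl, h0]
  simp only [hj]
  rw [hBX, SC'_sub_sum hU ((hF.dl hU e0).dl hU e0)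
    (fun j => (hF.dl hU (ee j)).dl hU (ee j)) hq]
  simp only [Fin.sum_univ_three]
  ring

theorem BX'_sub {F G : E' → ℝ} (hF : Sm Uset F) (hG : Sm Uset G) {q : E'} (hq : q ∈ Uset) :
    BX' (fun q' => F q' - G q') q = BX' F q - BX' G q := by
  have hdl : ∀ (v : E'), ∀ q' ∈ Uset,
      dl v (fun q'' => F q'' - G q'') q' = dl v F q' - dl v G q' :=
    fun v q' hq' => dl_sub (hF.diffAt hU hq') (hG.diffAt hU hq') v
  have h2 : ∀ (v : E'), dl v (dl v (fun q'' => F q'' - G q'')) q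
      = dl v (dl v F) q - dl v (dl v G) q := by
    intro v
    rw [dl_congr hU (hdl v) hq v,
      show (fun q' => dl v F q' - dl v G q')
        = fun q' => dl v F q' - dl v G q' from rfl,
      dl_sub ((hF.dl hU v).diffAt hU hq) ((hG.dl hU v).diffAt hU hq) v]
  simp only [BX', h2]
  simp only [Fin.sum_univ_three]
  ring

/-- Differentiating a pointwise identity A = -B - Σ C k * D k through S. -/
theorem SC'_congr_combo {A B : E' → ℝ} {C D : Fin 3 → E' → ℝ}
    (hA : Sm Uset A) (hB : Sm Uset B) (hC : ∀ k, Sm Uset (C k)) (hD : ∀ k, Sm Uset (D k))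
    (h : ∀ q' ∈ Uset, A q' = -B q' - ∑ k, C k q' * D k q') {q : E'} (hq : q ∈ Uset) :
    SC' A q = -SC' B q - ∑ k, (SC' (C k) q * D k q + C k q * SC' (D k) q) := by
  have hdl : ∀ (v : E'), dl v A q
      = -dl v B q - ∑ k, (dl v (C k) q * D k q + C k q * dl v (D k) q) := by
    intro v
    rw [dl_congr hU h hq v]
    rw [show (fun q' => -B q' - ∑ k, C k q' * D k q')
        = fun q' => (fun q'' => -B q'') q' - (fun q'' => ∑ k, C k q'' * D k q'') q' from rfl]
    rw [dl_sub (by exact (hB.diffAt hU hq).neg)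
      (DifferentiableAt.fun_sum fun k _ => ((hC k).diffAt hU hq).fun_mul ((hD k).diffAt hU hq)) v,
      dl_neg, dl_sum (fun k _ => ((hC k).diffAt hU hq).fun_mul ((hD k).diffAt hU hq)) v]
    congr 1
    apply Finset.sum_congr rfl
    intro k _
    exact dl_mul ((hC k).diffAt hU hq) ((hD k).diffAt hU hq) v
  simp only [SC', hdl]
  simp only [Fin.sum_univ_three]
  ring

end ops


section bridge

theorem Dt_eq {f : STF} {q : E'} (h : DifferentiableAt ℝ (fun q' : E' => f q'.1 q'.2) q) :
    Dt f q.1 q.2 = dl e0 (fun q' : E' => f q'.1 q'.2) q := by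
  have hm : HasDerivAt (fun s : ℝ => ((s, q.2) : E')) ((1:ℝ), (0:Pt)) q.1 :=
    (hasDerivAt_id q.1).prodMk (hasDerivAt_const q.1 q.2)
  have h2 := h.hasFDerivAt.comp_hasDerivAt q.1 hm
  simpa [Dt, dl, e0, Function.comp_def] using h2.deriv

theorem Dsp_eq {f : STF} {q : E'} (j : Fin 3)
    (h : DifferentiableAt ℝ (fun q' : E' => f q'.1 q'.2) q) :
    Dsp j f q.1 q.2 = dl (ee j) (fun q' : E' => f q'.1 q'.2) q := by
  have hm : HasFDerivAt (fun y : Pt => ((q.1, y) : E'))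
      ((0 : Pt →L[ℝ] ℝ).prod (ContinuousLinearMap.id ℝ Pt)) q.2 :=
    (hasFDerivAt_const q.1 q.2).prodMk (hasFDerivAt_id q.2)
  have h4 := (h.hasFDerivAt.comp q.2 hm).fderiv
  show fderiv ℝ (f q.1) q.2 (EuclideanSpace.single j 1) = _
  rw [show (f q.1) = ((fun q' : E' => f q'.1 q'.2) ∘ fun y => ((q.1, y) : E')) from rfl, h4]
  simp [dl, ee]

include hU

theorem Dt_congr {f g : STF} (h : ∀ q' ∈ Uset, f q'.1 q'.2 = g q'.1 q'.2) {q : E'}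
    (hq : q ∈ Uset) : Dt f q.1 q.2 = Dt g q.1 q.2 := by
  have hcont : Continuous (fun s : ℝ => ((s, q.2) : E')) :=
    continuous_id.prodMk continuous_const
  have hmem : (fun s : ℝ => ((s, q.2) : E')) ⁻¹' Uset ∈ nhds q.1 :=
    hcont.continuousAt.preimage_mem_nhds (hU.mem_nhds hq)
  have hev : (fun s => f s q.2) =ᶠ[nhds q.1] fun s => g s q.2 := by
    filter_upwards [hmem] with s hs using h (s, q.2) hs
  exact hev.deriv_eq

theorem Dsp_congr {f g : STF} (j : Fin 3) (h : ∀ q' ∈ Uset, f q'.1 q'.2 = g q'.1 q'.2)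
    {q : E'} (hq : q ∈ Uset) : Dsp j f q.1 q.2 = Dsp j g q.1 q.2 := by
  have hcont : Continuous (fun y : Pt => ((q.1, y) : E')) :=
    continuous_const.prodMk continuous_id
  have hmem : (fun y : Pt => ((q.1, y) : E')) ⁻¹' Uset ∈ nhds q.2 :=
    hcont.continuousAt.preimage_mem_nhds (hU.mem_nhds hq)
  have hev : (f q.1) =ᶠ[nhds q.2] (g q.1) := by
    filter_upwards [hmem] with y hy using h (q.1, y) hy
  show fderiv ℝ (f q.1) q.2 (EuclideanSpace.single j 1) = fderiv ℝ (g q.1) q.2 _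
  rw [hev.fderiv_eq]

theorem Dt_eqU {f : STF} {F : E' → ℝ} (hF : Sm Uset F)
    (he : ∀ q' ∈ Uset, f q'.1 q'.2 = F q') {q : E'} (hq : q ∈ Uset) :
    Dt f q.1 q.2 = dl e0 F q := by
  rw [Dt_congr hU (g := fun t x => F (t, x)) he hq]
  exact Dt_eq (hF.diffAt hU hq)

theorem Dsp_eqU {f : STF} {F : E' → ℝ} (j : Fin 3) (hF : Sm Uset F)
    (he : ∀ q' ∈ Uset, f q'.1 q'.2 = F q') {q : E'} (hq : q ∈ Uset) :
    Dsp j f q.1 q.2 = dl (ee j) F q := by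
  rw [Dsp_congr hU j (g := fun t x => F (t, x)) he hq]
  exact Dsp_eq j (hF.diffAt hU hq)

theorem Box_eqU {f : STF} {F : E' → ℝ} (hF : Sm Uset F)
    (he : ∀ q' ∈ Uset, f q'.1 q'.2 = F q') {q : E'} (hq : q ∈ Uset) :
    Box f q.1 q.2 = BX' F q := by
  have h2 : Dt (Dt f) q.1 q.2 = dl e0 (dl e0 F) q :=
    Dt_eqU hU (hF.dl hU e0) (fun q' hq' => Dt_eqU hU hF he hq') hq
  have h3 : ∀ i : Fin 3, Dsp i (Dsp i f) q.1 q.2 = dl (ee i) (dl (ee i) F) q :=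
    fun i => Dsp_eqU hU i (hF.dl hU (ee i))
      (fun q' hq' => Dsp_eqU hU i hF he hq') hq
  show Dt (Dt f) q.1 q.2 - ∑ i, Dsp i (Dsp i f) q.1 q.2 = _
  rw [h2]
  simp only [h3]
  rfl

theorem Sc_eqU {f : STF} {F : E' → ℝ} (hF : Sm Uset F)
    (he : ∀ q' ∈ Uset, f q'.1 q'.2 = F q') {q : E'} (hq : q ∈ Uset) :
    Sc f q.1 q.2 = SC' F q := by
  show q.1 * Dt f q.1 q.2 + ∑ i, q.2 i * Dsp i f q.1 q.2 = _
  rw [Dt_eqU hU hF he hq]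
  have h3 : ∀ i : Fin 3, Dsp i f q.1 q.2 = dl (ee i) F q :=
    fun i => Dsp_eqU hU i hF he hq
  simp only [h3]
  rfl

end bridge

theorem scaling_commutation
    (Uset : Set (ℝ × Pt)) (hU : IsOpen Uset)
    (Y : STV) (p : STF)
    (hY : ∀ i, ContDiffOn ℝ (⊤ : ℕ∞) (fun q : ℝ × Pt => Y q.1 q.2 i) Uset)
    (hp : ContDiffOn ℝ (⊤ : ℕ∞) (fun q : ℝ × Pt => p q.1 q.2) Uset)
    (heq : ∀ q ∈ Uset, ∀ i : Fin 3,
      Box (fun s y => Y s y i) q.1 q.2 =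
        - Dsp i p q.1 q.2
          - ∑ k, Dsp i (fun s y => Y s y k) q.1 q.2 * Box (fun s y => Y s y k) q.1 q.2) :
    ∀ q ∈ Uset, ∀ j : Fin 3,
      Box (fun s y => ScT Y s y j) q.1 q.2 =
        - (∑ k, Dsp j (fun s y => ScT Y s y k) q.1 q.2
              * Box (fun s y => Y s y k) q.1 q.2)
          - (∑ k, Dsp j (fun s y => Y s y k) q.1 q.2
              * Box (fun s y => ScT Y s y k) q.1 q.2)
          - Dsp j (Sc p) q.1 q.2 := by
  intro q hq j
  -- product-space reformulations
  have hPsm : Sm Uset (fun q' : E' => p q'.1 q'.2) := hp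
  have hFsm : ∀ i : Fin 3, Sm Uset (fun q' : E' => Y q'.1 q'.2 i) := hY
  have hGsm : ∀ i : Fin 3,
      Sm Uset (fun q' : E' => SC' (fun q'' : E' => Y q''.1 q''.2 i) q'
        - Y q'.1 q'.2 i) :=
    fun i => ((hFsm i).sc hU).sub (hFsm i)
  -- the equation transported to the product space
  have heqU : ∀ q' ∈ Uset, ∀ i : Fin 3,
      BX' (fun q'' : E' => Y q''.1 q''.2 i) q'
        = -dl (ee i) (fun q'' : E' => p q''.1 q''.2) q'
          - ∑ k, dl (ee i) (fun q'' : E' => Y q''.1 q''.2 k) q'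
              * BX' (fun q'' : E' => Y q''.1 q''.2 k) q' := by
    intro q' hq' i
    calc BX' (fun q'' : E' => Y q''.1 q''.2 i) q'
        = Box (fun s y => Y s y i) q'.1 q'.2 :=
          (Box_eqU hU (hFsm i) (fun _ _ => rfl) hq').symm
      _ = - Dsp i p q'.1 q'.2
          - ∑ k, Dsp i (fun s y => Y s y k) q'.1 q'.2
              * Box (fun s y => Y s y k) q'.1 q'.2 := heq q' hq' i
      _ = _ := by
          rw [Dsp_eqU hU i hPsm (fun _ _ => rfl) hq']
          congr 1
          refine Finset.sum_congr rfl fun k _ => ?_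
          rw [Dsp_eqU hU i (hFsm k) (fun _ _ => rfl) hq',
            Box_eqU hU (hFsm k) (fun _ _ => rfl) hq']
  -- S̃Y agrees on Uset with the product-space formulation
  have heScT : ∀ i : Fin 3, ∀ q' ∈ Uset, ScT Y q'.1 q'.2 i
      = SC' (fun q'' : E' => Y q''.1 q''.2 i) q' - Y q'.1 q'.2 i := by
    intro i q' hq'
    show Sc (fun s y => Y s y i) q'.1 q'.2 - Y q'.1 q'.2 i = _
    rw [Sc_eqU hU (hFsm i) (fun _ _ => rfl) hq']
  -- rewrite everything through the bridges
  have hL : Box (fun s y => ScT Y s y j) q.1 q.2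
      = BX' (fun q' : E' => SC' (fun q'' : E' => Y q''.1 q''.2 j) q' - Y q'.1 q'.2 j) q :=
    Box_eqU hU (hGsm j) (heScT j) hq
  have hR1 : ∀ k : Fin 3, Dsp j (fun s y => ScT Y s y k) q.1 q.2
      = dl (ee j) (fun q' : E' => SC' (fun q'' : E' => Y q''.1 q''.2 k) q'
          - Y q'.1 q'.2 k) q :=
    fun k => Dsp_eqU hU j (hGsm k) (heScT k) hq
  have hR2 : ∀ k : Fin 3, Box (fun s y => ScT Y s y k) q.1 q.2
      = BX' (fun q' : E' => SC' (fun q'' : E' => Y q''.1 q''.2 k) q'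
          - Y q'.1 q'.2 k) q :=
    fun k => Box_eqU hU (hGsm k) (heScT k) hq
  have hR3 : ∀ k : Fin 3, Dsp j (fun s y => Y s y k) q.1 q.2
      = dl (ee j) (fun q'' : E' => Y q''.1 q''.2 k) q :=
    fun k => Dsp_eqU hU j (hFsm k) (fun _ _ => rfl) hq
  have hR4 : ∀ k : Fin 3, Box (fun s y => Y s y k) q.1 q.2
      = BX' (fun q'' : E' => Y q''.1 q''.2 k) q :=
    fun k => Box_eqU hU (hFsm k) (fun _ _ => rfl) hq
  have hR5 : Dsp j (Sc p) q.1 q.2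
      = dl (ee j) (SC' (fun q'' : E' => p q''.1 q''.2)) q :=
    Dsp_eqU hU j (hPsm.sc hU) (fun q' hq' => Sc_eqU hU hPsm (fun _ _ => rfl) hq') hq
  rw [hL, hR5]
  simp only [hR1, hR2, hR3, hR4]
  -- now a pure product-space identity
  -- (a) Box of S̃-type functions
  have ha : ∀ q' ∈ Uset, ∀ k : Fin 3,
      BX' (fun q'' : E' => SC' (fun q3 : E' => Y q3.1 q3.2 k) q''
          - Y q''.1 q''.2 k) q'
        = SC' (BX' (fun q3 : E' => Y q3.1 q3.2 k)) q'
          + BX' (fun q3 : E' => Y q3.1 q3.2 k) q' := by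
    intro q' hq' k
    rw [BX'_sub hU ((hFsm k).sc hU) (hFsm k) hq', BX_SC hU (hFsm k) hq']
    ring
  -- (b) gradient of S̃-type functions
  have hb : ∀ k : Fin 3,
      dl (ee j) (fun q'' : E' => SC' (fun q3 : E' => Y q3.1 q3.2 k) q''
          - Y q''.1 q''.2 k) q
        = SC' (dl (ee j) (fun q3 : E' => Y q3.1 q3.2 k)) q := by
    intro k
    rw [dl_sub (((hFsm k).sc hU).diffAt hU hq) ((hFsm k).diffAt hU hq),
      dl_SC_ee hU (hFsm k) hq j]
    ring
  -- (c) gradient of S p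
  have hc : dl (ee j) (SC' (fun q'' : E' => p q''.1 q''.2)) q
      = SC' (dl (ee j) (fun q'' : E' => p q''.1 q''.2)) q
        + dl (ee j) (fun q'' : E' => p q''.1 q''.2) q :=
    dl_SC_ee hU hPsm hq j
  -- (d) S applied to the equation
  have hd : SC' (BX' (fun q3 : E' => Y q3.1 q3.2 j)) q
      = -SC' (dl (ee j) (fun q'' : E' => p q''.1 q''.2)) q
        - ∑ k, (SC' (dl (ee j) (fun q3 : E' => Y q3.1 q3.2 k)) q
              * BX' (fun q3 : E' => Y q3.1 q3.2 k) q
            + dl (ee j) (fun q3 : E' => Y q3.1 q3.2 k) q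
              * SC' (BX' (fun q3 : E' => Y q3.1 q3.2 k)) q) :=
    SC'_congr_combo hU ((hFsm j).bx hU) (hPsm.dl hU (ee j))
      (fun k => (hFsm k).dl hU (ee j)) (fun k => (hFsm k).bx hU)
      (fun q' hq' => heqU q' hq' j) hq
  simp only [ha q hq, hb]
  rw [hd, hc]
  have he0 := heqU q hq j
  simp only [Fin.sum_univ_three] at he0 ⊢
  rw [he0]
  ring

end Stmt19
end
end
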